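/- (Train-track counterexample without direction non-concentration.) For s = 1/2 there is a collection T of ~δ^{-1} δ-tubes which is a (δ,1)-set (as a subset of the space of lines), consisting of δ^{-1/2} bushes of δ^{-1/2} tubes each, where the i-th bush passes through a δ × δ^{1/2} horizontal rectangle U_i, with consecutive rectangles vertically separated by δ^{1/2}; every δ-square inside some U_i lies in P_{~δ^{-1/2}}(T), and there are ~δ^{-1} such squares, so |P_{r}(T)| ≳ δ^{-1} with r ~ δ^{-1/2}, which violates the bound |P_r(T)| ≲ δ^{-υ}|T|²/r³ ~ δ^{-1/2−υ}. The direction set of T consists of δ^{-1/2} consecutive δ-arcs and hence is not a (δ,1/2)-set. -/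

import Mathlib

open Set

noncomputable section

def sqIdx (δ : ℝ) (q : ℤ × ℤ) : Set (ℝ × ℝ) :=
  Set.Ico ((q.1 : ℝ) * δ) (((q.1 : ℝ) + 1) * δ) ×ˢ
    Set.Ico ((q.2 : ℝ) * δ) (((q.2 : ℝ) + 1) * δ)

def inBox (δ : ℝ) (q : ℤ × ℤ) : Prop :=
  0 ≤ q.1 ∧ 0 ≤ q.2 ∧ (q.1 : ℝ) * δ ≤ 1 ∧ (q.2 : ℝ) * δ ≤ 1

/-- The δ-tube in direction θ with offset b (a δ-neighborhood of a line segment in the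
unit square, the line having direction (cos θ, sin θ)). -/
def tube (δ θ b : ℝ) : Set (ℝ × ℝ) :=
  {p : ℝ × ℝ | |(-Real.sin θ) * p.1 + Real.cos θ * p.2 - b| ≤ δ ∧
    p.1 ∈ Set.Icc (0:ℝ) 1 ∧ p.2 ∈ Set.Icc (0:ℝ) 1}

/-- Number of tubes of the collection 𝒯 meeting the δ-square indexed by q. -/
def tubeCount (𝒯 : Set (Set (ℝ × ℝ))) (δ : ℝ) (q : ℤ × ℤ) : ℕ :=
  {t | t ∈ 𝒯 ∧ (t ∩ sqIdx δ q).Nonempty}.ncard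

/-- δ-squares of the unit square meeting ~r tubes of 𝒯 (between r and 2r). -/
def richSquares (𝒯 : Set (Set (ℝ × ℝ))) (δ r : ℝ) : Set (ℤ × ℤ) :=
  {q | inBox δ q ∧ r ≤ (tubeCount 𝒯 δ q : ℝ) ∧ (tubeCount 𝒯 δ q : ℝ) ≤ 2 * r}

/-- δ-squares of the unit square meeting at least r tubes of 𝒯. -/
def richSquaresGe (𝒯 : Set (Set (ℝ × ℝ))) (δ r : ℝ) : Set (ℤ × ℤ) :=
  {q | inBox δ q ∧ r ≤ (tubeCount 𝒯 δ q : ℝ)}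

end

set_option maxHeartbeats 0

lemma sin_lip (a b : ℝ) : |Real.sin a - Real.sin b| ≤ |a - b| := by
  rw [Real.sin_sub_sin]
  have h1 : |Real.sin ((a - b)/2)| ≤ |(a - b)/2| := Real.abs_sin_le_abs
  have h2 : |Real.cos ((a + b)/2)| ≤ 1 := Real.abs_cos_le_one _
  calc |2 * Real.sin ((a - b)/2) * Real.cos ((a + b)/2)|
      = 2 * |Real.sin ((a - b)/2)| * |Real.cos ((a + b)/2)| := by
        rw [abs_mul, abs_mul]; norm_num
    _ ≤ 2 * |(a - b)/2| * 1 :=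
        mul_le_mul (by linarith) h2 (abs_nonneg _) (by positivity)
    _ = |a - b| := by rw [mul_one, abs_div, abs_two]; ring

lemma card_of_sep (S : Finset ℕ) (g : ℕ → ℝ) (ε L : ℝ) (hε : 0 < ε) (hL : 0 ≤ L)
    (hsep : ∀ a ∈ S, ∀ b ∈ S, a < b → ε * ((b : ℝ) - a) ≤ g b - g a)
    (hdiam : ∀ a ∈ S, ∀ b ∈ S, g b - g a ≤ L) :
    (S.card : ℝ) * ε ≤ L + ε := by
  rcases S.eq_empty_or_nonempty with h | h
  · simp [h]; positivity
  · set m := S.min' h with hm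
    set M := S.max' h with hM
    have hmS : m ∈ S := S.min'_mem h
    have hMS : M ∈ S := S.max'_mem h
    have hmM : m ≤ M := S.min'_le _ hMS
    have hsub : S ⊆ Finset.Icc m M := by
      intro a ha; exact Finset.mem_Icc.2 ⟨S.min'_le a ha, S.le_max' a ha⟩
    have hcard : S.card ≤ M + 1 - m := by
      simpa [Nat.card_Icc] using Finset.card_le_card hsub
    have h1 : ε * ((M : ℝ) - m) ≤ L := by
      rcases eq_or_lt_of_le hmM with h2 | h2
      · rw [h2]; simpa using hL
      · exact le_trans (hsep m hmS M hMS h2) (hdiam m hmS M hMS)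
    have h3 : (S.card : ℝ) ≤ (M : ℝ) + 1 - m := by
      calc (S.card : ℝ) ≤ (↑(M + 1 - m) : ℝ) := by exact_mod_cast hcard
        _ = (M : ℝ) + 1 - m := by rw [Nat.cast_sub (by omega)]; push_cast; ring
    nlinarith

/-- the train-track counterexample at s = 1/2: a (δ,1)-set of ~δ^{-1} tubes
whose direction set lies in an interval of length ~δ^{1/2}, with ~δ^{-1} squares that are
~δ^{-1/2}-rich, violating the Szemerédi–Trotter tube bound. -/
theorem stmt17 :
    ∃ C : ℝ, 1 ≤ C ∧ ∃ δ₀ : ℝ, 0 < δ₀ ∧ ∀ δ : ℝ, 0 < δ → δ < δ₀ →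
      ∃ D : Set (ℝ × ℝ), D.Finite ∧
        δ⁻¹ / C ≤ (D.ncard : ℝ) ∧ (D.ncard : ℝ) ≤ C * δ⁻¹ ∧
        (∀ (x : ℝ × ℝ) (r : ℝ), δ ≤ r → r ≤ 1 →
          ((D ∩ Metric.closedBall x r).ncard : ℝ) ≤ C * r * (D.ncard : ℝ)) ∧
        (∃ θ₀ : ℝ, ∀ p ∈ D, θ₀ ≤ p.1 ∧ p.1 ≤ θ₀ + C * δ ^ ((1:ℝ)/2)) ∧
        δ ^ (-(1:ℝ)/2) / C ≤ (({θ | ∃ b, (θ, b) ∈ D} : Set ℝ).ncard : ℝ) ∧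
        ∃ r : ℝ, δ ^ (-(1:ℝ)/2) / C ≤ r ∧ r ≤ C * δ ^ (-(1:ℝ)/2) ∧
          δ⁻¹ / C ≤
            ((richSquaresGe {tb | ∃ p ∈ D, tb = tube δ p.1 p.2} δ r).ncard : ℝ) ∧
          δ ^ (-(1:ℝ)/2) * ((D.ncard : ℝ)) ^ 2 / (C * r ^ 3) ≤
            ((richSquaresGe {tb | ∃ p ∈ D, tb = tube δ p.1 p.2} δ r).ncard : ℝ) := by
  refine ⟨1000, by norm_num, 1/1000000, by norm_num, ?_⟩
  intro δ hδ hδ₀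
  classical
  -- basic scale facts
  set s : ℝ := Real.sqrt δ with hs_def
  have hs0 : 0 < s := Real.sqrt_pos.2 hδ
  have hδs : s^2 = δ := Real.sq_sqrt hδ.le
  have hsle : s ≤ 1/1000 := by
    have h1 : s ≤ Real.sqrt (1/1000000) := Real.sqrt_le_sqrt hδ₀.le
    have h2 : Real.sqrt (1/1000000) = 1/1000 := by
      rw [show (1:ℝ)/1000000 = (1/1000)^2 by norm_num, Real.sqrt_sq (by norm_num)]
    linarith
  have hsinv : (1000:ℝ) ≤ s⁻¹ := by
    rw [le_inv_comm₀ (by norm_num) hs0]; linarith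
  have hss : s⁻¹ * δ = s := by
    rw [← hδs]; field_simp
  set N : ℕ := ⌊s⁻¹⌋₊ with hN_def
  have hNle : (N:ℝ) ≤ s⁻¹ := Nat.floor_le (by positivity)
  have hNgt : s⁻¹ < (N:ℝ) + 1 := Nat.lt_floor_add_one _
  have hN1000 : 1000 ≤ N := Nat.le_floor (by exact_mod_cast hsinv)
  have hN1000R : (1000:ℝ) ≤ (N:ℝ) := by exact_mod_cast hN1000
  have hNR : s⁻¹/2 ≤ (N:ℝ) := by linarith
  have hNδ : (N:ℝ)*δ ≤ s := by
    calc (N:ℝ)*δ ≤ s⁻¹ * δ := by gcongr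
      _ = s := hss
  have hNδ' : s/2 ≤ (N:ℝ)*δ := by
    have h := mul_le_mul_of_nonneg_right hNR hδ.le
    calc s/2 = (s⁻¹ * δ)/2 := by rw [hss]
      _ = s⁻¹/2 * δ := by ring
      _ ≤ (N:ℝ)*δ := h
  have hN2δ : (N:ℝ)^2*δ ≤ 1 := by
    have h := mul_le_mul hNle hNδ (by positivity) (by positivity)
    calc (N:ℝ)^2*δ = (N:ℝ) * ((N:ℝ)*δ) := by ring
      _ ≤ s⁻¹ * s := h
      _ = 1 := inv_mul_cancel₀ hs0.ne'
  have hNs : 1/2 ≤ (N:ℝ) * s := by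
    have h := mul_le_mul_of_nonneg_right hNR hs0.le
    have : s⁻¹/2*s = 1/2 := by field_simp
    linarith [h, this.symm.le]
  have hNsq : δ⁻¹ ≤ 4*(N:ℝ)^2 := by
    have h1 : s⁻¹ ≤ 2*(N:ℝ) := by linarith
    have h2 : s⁻¹*s⁻¹ = δ⁻¹ := by rw [← hδs]; field_simp
    nlinarith [inv_pos.2 hs0]
  set A : ℕ := N / 2 with hA_def
  have hA2 : 2*A ≤ N ∧ N ≤ 2*A+1 := by omega
  have hAub : (A:ℝ) ≤ (N:ℝ)/2 := by
    have h : ((2*A:ℕ):ℝ) ≤ ((N:ℕ):ℝ) := by exact_mod_cast hA2.1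
    push_cast at h; linarith
  have hAlb : (N:ℝ)/4 ≤ (A:ℝ) := by
    have h := hA2.2
    have : (N:ℝ) ≤ 2*(A:ℝ)+1 := by exact_mod_cast h
    linarith
  have hA1 : 1 ≤ A := by omega
  have hAδlb : s/8 ≤ (A:ℝ)*δ := by
    have : (N:ℝ)/4*δ ≤ (A:ℝ)*δ := by gcongr
    have h2 : (N:ℝ)/4*δ = ((N:ℝ)*δ)/4 := by ring
    linarith [hNδ']
  have hAδub : (A:ℝ)*δ ≤ s/2 := by
    have : (A:ℝ)*δ ≤ (N:ℝ)/2*δ := by gcongr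
    have h2 : (N:ℝ)/2*δ = ((N:ℝ)*δ)/2 := by ring
    linarith [hNδ]
  -- angles
  set θf : ℕ → ℝ := fun j => Real.arcsin (4*j*δ) with hθf_def
  set cf : ℕ → ℝ := fun j => Real.sqrt (1 - (4*j*δ)^2) with hcf_def
  have hu : ∀ j < N, 0 ≤ 4*(j:ℝ)*δ ∧ 4*(j:ℝ)*δ ≤ 4*s := by
    intro j hj
    constructor
    · positivity
    · have : (j:ℝ) ≤ N := by exact_mod_cast hj.le
      nlinarith [hNδ, hδ.le]
  have hs4 : 4*s ≤ 1/250 := by linarith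
  have hsin : ∀ j < N, Real.sin (θf j) = 4*(j:ℝ)*δ := by
    intro j hj
    exact Real.sin_arcsin (by linarith [(hu j hj).1]) (by linarith [(hu j hj).2])
  have hcos : ∀ j, Real.cos (θf j) = cf j := fun j => Real.cos_arcsin _
  have hθ0 : ∀ j, 0 ≤ θf j := by
    intro j; exact Real.arcsin_nonneg.2 (by positivity)
  have hθub : ∀ j < N, θf j ≤ 7*s := by
    intro j hj
    have h1 : |θf j| ≤ Real.pi/2 := by
      rw [abs_of_nonneg (hθ0 j)]; exact Real.arcsin_le_pi_div_two _
    have h2 := Real.mul_abs_le_abs_sin h1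
    rw [abs_of_nonneg (hθ0 j), hsin j hj,
      abs_of_nonneg (by linarith [(hu j hj).1])] at h2
    have hπ1 : (3:ℝ) < Real.pi := Real.pi_gt_three
    have hπ2 : Real.pi < 3.15 := Real.pi_lt_d2
    have h3 : 2/Real.pi * θf j ≤ 4*s := le_trans h2 (hu j hj).2
    have h4 : Real.pi/2 * (2/Real.pi * θf j) = θf j := by
      field_simp
    have h5 : θf j ≤ Real.pi/2 * (4*s) := by
      rw [← h4]
      apply mul_le_mul_of_nonneg_left h3 (by positivity)
    nlinarith [hs0.le]
  have hθmono : ∀ j k : ℕ, j ≤ k → θf j ≤ θf k := by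
    intro j k hjk
    apply Real.monotone_arcsin
    have : (j:ℝ) ≤ k := by exact_mod_cast hjk
    nlinarith [hδ.le]
  have hclb : ∀ j < N, 1 - 16*δ ≤ cf j := by
    intro j hj
    have hu2 : (4*(j:ℝ)*δ)^2 ≤ 16*δ := by
      nlinarith [(hu j hj).1, (hu j hj).2, hδs, hs0.le, hsle]
    have h0 : (0:ℝ) ≤ 1 - (4*(j:ℝ)*δ)^2 := by nlinarith [hδ₀]
    have hsq := Real.sq_sqrt h0
    have hnn := Real.sqrt_nonneg (1 - (4*(j:ℝ)*δ)^2)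
    nlinarith [hδ₀, hδ]
  have hcub : ∀ j, cf j ≤ 1 := by
    intro j
    simp only [hcf_def]
    exact Real.sqrt_le_one.2 (by nlinarith [sq_nonneg (4*(j:ℝ)*δ)])
  have hc12 : ∀ j < N, 1/2 ≤ cf j := by
    intro j hj
    have := hclb j hj
    nlinarith [hδ₀]
  have hcmono : ∀ j k : ℕ, j ≤ k → cf k ≤ cf j := by
    intro j k hjk
    simp only [hcf_def]
    apply Real.sqrt_le_sqrt
    have hjk' : (j:ℝ) ≤ k := by exact_mod_cast hjk
    have hjj : (j:ℝ)*(j:ℝ) ≤ (k:ℝ)*(k:ℝ) :=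
      mul_le_mul hjk' hjk' (Nat.cast_nonneg _) (Nat.cast_nonneg _)
    nlinarith [mul_nonneg (sub_nonneg.2 hjj) (sq_nonneg δ)]
  -- heights
  have hhi : ∀ i < N, 0 ≤ (i:ℝ)*A*δ ∧ (i:ℝ)*A*δ ≤ 1/2 := by
    intro i hi
    constructor
    · positivity
    · have h1 : (i:ℝ) ≤ N := by exact_mod_cast hi.le
      have h2 : (i:ℝ)*A*δ ≤ (N:ℝ)*((N:ℝ)/2)*δ := by
        apply mul_le_mul_of_nonneg_right _ hδ.le
        apply mul_le_mul h1 hAub (by positivity) (by positivity)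
      nlinarith [hN2δ]
  -- the point set
  set f : ℕ × ℕ → ℝ × ℝ := fun p => (θf p.1, cf p.1 * ((p.2:ℝ)*A*δ)) with hf_def
  set G : Finset (ℕ × ℕ) := Finset.range N ×ˢ Finset.range N with hG_def
  set D : Set (ℝ × ℝ) := f '' ↑G with hD_def
  have hmemG : ∀ p : ℕ × ℕ, p ∈ G ↔ p.1 < N ∧ p.2 < N := by
    intro p; simp [hG_def, Finset.mem_product]
  have hθinj : ∀ j k : ℕ, j < N → k < N → θf j = θf k → j = k := by
    intro j k hj hk h
    have := congrArg Real.sin h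
    rw [hsin j hj, hsin k hk] at this
    rw [show (4:ℝ)*(j:ℝ)*δ = (4*δ)*j by ring, show (4:ℝ)*(k:ℝ)*δ = (4*δ)*k by ring] at this
    have : (j:ℝ) = k := mul_left_cancel₀ (by positivity) this
    exact_mod_cast this
  have hfinj : Set.InjOn f ↑G := by
    intro p hp q hq h
    rw [Finset.mem_coe] at hp hq
    have hp' := (hmemG p).1 hp
    have hq' := (hmemG q).1 hq
    have h1 : θf p.1 = θf q.1 := congrArg Prod.fst h
    have hjj : p.1 = q.1 := hθinj _ _ hp'.1 hq'.1 h1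
    have h2 : cf p.1 * ((p.2:ℝ)*A*δ) = cf q.1 * ((q.2:ℝ)*A*δ) := congrArg Prod.snd h
    rw [hjj] at h2
    have hc0 : 0 < cf q.1 := lt_of_lt_of_le (by norm_num) (hc12 _ hq'.1)
    have hA0 : 0 < (A:ℝ) := by exact_mod_cast hA1
    have h4 := mul_left_cancel₀ hc0.ne' h2
    rw [show (p.2:ℝ)*A*δ = ((A:ℝ)*δ)*p.2 by ring,
      show (q.2:ℝ)*A*δ = ((A:ℝ)*δ)*q.2 by ring] at h4
    have hA0 : (0:ℝ) < (A:ℝ)*δ := by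
      have : (0:ℝ) < (A:ℝ) := by exact_mod_cast hA1
      positivity
    have h3 : (p.2:ℝ) = q.2 := mul_left_cancel₀ hA0.ne' h4
    have : p.2 = q.2 := by exact_mod_cast h3
    exact Prod.ext hjj this
  have hDfin : D.Finite := (G.finite_toSet).image f
  have hDcard : D.ncard = N * N := by
    rw [hD_def, Set.ncard_image_of_injOn hfinj, Set.ncard_coe_finset, hG_def,
      Finset.card_product, Finset.card_range]
  have hDcardR : (D.ncard : ℝ) = (N:ℝ) * N := by rw [hDcard]; push_cast; ring
  -- cardinality bounds
  have hcard_lb : δ⁻¹ / 1000 ≤ (D.ncard : ℝ) := by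
    rw [hDcardR]
    nlinarith [hNsq, hNR, inv_pos.2 hδ]
  have hcard_ub : (D.ncard : ℝ) ≤ 1000 * δ⁻¹ := by
    rw [hDcardR]
    have h2 : s⁻¹*s⁻¹ = δ⁻¹ := by rw [← hδs]; field_simp
    nlinarith [hNle, inv_pos.2 hs0, inv_pos.2 hδ]
  -- rpow
  have hpow_half : δ ^ ((1:ℝ)/2) = s := by
    rw [hs_def, Real.sqrt_eq_rpow]
  have hpow_neg : δ ^ (-(1:ℝ)/2) = s⁻¹ := by
    rw [neg_div, Real.rpow_neg hδ.le, hpow_half]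
  clear_value s N A θf cf f G D
  have hAδ0 : (0:ℝ) < (A:ℝ)*δ := by
    have : (0:ℝ) < (A:ℝ) := by exact_mod_cast hA1
    positivity
  have hnonconc : ∀ (x : ℝ × ℝ) (r : ℝ), δ ≤ r → r ≤ 1 →
      ((D ∩ Metric.closedBall x r).ncard : ℝ) ≤ 1000 * r * (D.ncard : ℝ) := by
    intro x r hr1 hr2
    have hr0 : 0 < r := lt_of_lt_of_le hδ hr1
    clear hcard_lb hcard_ub hpow_half hpow_neg hθinj hθub hsinv hs4 hu hcmono hc12
    clear hDcard hDfin hfinj hN_def hA_def hA2 hθf_def hcf_def hs_def hN1000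
    clear hNgt hNle hδ₀ hδs hsle hss hNδ' hN2δ hA1 hAub hAlb hG_def hNδ hN1000R hcos
    obtain ⟨Sθ, hSθmem⟩ : ∃ S : Finset ℕ, ∀ j, j ∈ S ↔ j < N ∧ |θf j - x.1| ≤ r :=
      ⟨(Finset.range N).filter (fun j => |θf j - x.1| ≤ r), by
        intro j; simp [Finset.mem_filter]⟩
    obtain ⟨Si, hSimem⟩ : ∃ S : Finset ℕ, ∀ i, i ∈ S ↔ i < N ∧ |(i:ℝ)*A*δ - x.2| ≤ 17*r :=
      ⟨(Finset.range N).filter (fun i => |(i:ℝ)*A*δ - x.2| ≤ 17*r), by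
        intro i; simp [Finset.mem_filter]⟩
    obtain ⟨T, hTmem⟩ : ∃ T : Finset (ℕ × ℕ), ∀ p, p ∈ T ↔ p ∈ G ∧ f p ∈ Metric.closedBall x r :=
      ⟨G.filter (fun p => f p ∈ Metric.closedBall x r), by
        intro p; simp [Finset.mem_filter]⟩
    have hsub1 : D ∩ Metric.closedBall x r ⊆ f '' ↑T := by
      rw [hD_def]
      rintro y ⟨⟨p, hp, rfl⟩, hball⟩
      exact ⟨p, Finset.mem_coe.2 ((hTmem p).2 ⟨Finset.mem_coe.1 hp, hball⟩), rfl⟩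
    have hstep2 : ((D ∩ Metric.closedBall x r).ncard : ℝ) ≤ (T.card : ℝ) := by
      have h1 : (D ∩ Metric.closedBall x r).ncard ≤ (f '' ↑T).ncard :=
        Set.ncard_le_ncard hsub1 ((T.finite_toSet).image f)
      have h2 : (f '' ↑T).ncard ≤ (↑T : Set (ℕ × ℕ)).ncard := Set.ncard_image_le T.finite_toSet
      rw [Set.ncard_coe_finset] at h2
      exact_mod_cast le_trans h1 h2
    clear hsub1 hD_def
    have hsub3 : T ⊆ Sθ ×ˢ Si := by
      intro p hp
      obtain ⟨hpG, hball⟩ := (hTmem p).1 hp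
      obtain ⟨hj, hi⟩ := (hmemG p).1 hpG
      rw [Metric.mem_closedBall, Prod.dist_eq] at hball
      simp only [hf_def] at hball
      have hb1 : |θf p.1 - x.1| ≤ r := by
        have h := le_trans le_sup_left hball
        rwa [Real.dist_eq] at h
      have hb2 : |cf p.1 * ((p.2:ℝ)*A*δ) - x.2| ≤ r := by
        have h := le_trans le_sup_right hball
        rwa [Real.dist_eq] at h
      have hh := hhi p.2 hi
      have hb3 : |(p.2:ℝ)*A*δ - x.2| ≤ 17*r := by
        have htri : |(p.2:ℝ)*A*δ - x.2| ≤
            |(p.2:ℝ)*A*δ - cf p.1 * ((p.2:ℝ)*A*δ)| + |cf p.1 * ((p.2:ℝ)*A*δ) - x.2| :=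
          abs_sub_le _ _ _
        have he : |(p.2:ℝ)*A*δ - cf p.1 * ((p.2:ℝ)*A*δ)| = (1 - cf p.1) * ((p.2:ℝ)*A*δ) := by
          rw [show (p.2:ℝ)*A*δ - cf p.1 * ((p.2:ℝ)*A*δ) = (1 - cf p.1) * ((p.2:ℝ)*A*δ) by ring]
          exact abs_of_nonneg (mul_nonneg (by linarith [hcub p.1]) hh.1)
        have hcl := hclb p.1 hj
        have hsmall : (1 - cf p.1) * ((p.2:ℝ)*A*δ) ≤ 16*δ := by
          have h1 : 1 - cf p.1 ≤ 16*δ := by linarith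
          have h2 : (p.2:ℝ)*A*δ ≤ 1 := le_trans hh.2 (by norm_num)
          calc (1 - cf p.1) * ((p.2:ℝ)*A*δ) ≤ (16*δ) * 1 :=
                mul_le_mul h1 h2 hh.1 (by positivity)
            _ = 16*δ := mul_one _
        rw [he] at htri
        linarith
      exact Finset.mem_product.2 ⟨(hSθmem p.1).2 ⟨hj, hb1⟩, (hSimem p.2).2 ⟨hi, hb3⟩⟩
    have hstep4 : (T.card : ℝ) ≤ (Sθ.card : ℝ) * (Si.card : ℝ) := by
      have h := Finset.card_le_card hsub3
      rw [Finset.card_product] at h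
      exact_mod_cast h
    clear hsub3 hTmem hmemG hf_def
    have hSθb : (Sθ.card : ℝ) * (4*δ) ≤ 2*r + 4*δ := by
      apply card_of_sep Sθ θf (4*δ) (2*r) (by positivity) (by positivity)
      · intro a ha b hb hab
        have haN : a < N := ((hSθmem a).1 ha).1
        have hbN : b < N := ((hSθmem b).1 hb).1
        have h1 : Real.sin (θf b) - Real.sin (θf a) = 4*δ*((b:ℝ) - (a:ℝ)) := by
          rw [hsin b hbN, hsin a haN]; ring
        have h2 := sin_lip (θf b) (θf a)
        have h3 : θf a ≤ θf b := hθmono a b hab.le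
        have hab' : (a:ℝ) ≤ (b:ℝ) := by exact_mod_cast hab.le
        rw [h1, abs_of_nonneg (mul_nonneg (by positivity) (sub_nonneg.2 hab')),
          abs_of_nonneg (by linarith)] at h2
        linarith
      · intro a ha b hb
        have h1 := abs_le.1 ((hSθmem a).1 ha).2
        have h2 := abs_le.1 ((hSθmem b).1 hb).2
        linarith
    have hSib : (Si.card : ℝ) * ((A:ℝ)*δ) ≤ 34*r + (A:ℝ)*δ := by
      apply card_of_sep Si (fun i => (i:ℝ)*A*δ) ((A:ℝ)*δ) (34*r) hAδ0 (by positivity)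
      · intro a ha b hb hab
        exact le_of_eq (by push_cast; ring)
      · intro a ha b hb
        have h1 := abs_le.1 ((hSimem a).1 ha).2
        have h2 := abs_le.1 ((hSimem b).1 hb).2
        linarith
    have hSθN : (Sθ.card : ℝ) ≤ (N:ℝ) := by
      have h : Sθ.card ≤ N := by
        have hsub : Sθ ⊆ Finset.range N := fun j hj =>
          Finset.mem_range.2 ((hSθmem j).1 hj).1
        calc Sθ.card ≤ (Finset.range N).card := Finset.card_le_card hsub
          _ = N := Finset.card_range N
      exact_mod_cast h
    clear hSθmem hSimem hsin hθmono hθ0 hclb hcub hhi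
    have hSibase : (Si.card:ℝ) * (s/8) ≤ 34*r + s/2 := by
      have h1 : (Si.card : ℝ) * (s/8) ≤ (Si.card : ℝ) * ((A:ℝ)*δ) :=
        mul_le_mul_of_nonneg_left hAδlb (Nat.cast_nonneg _)
      linarith [hSib, hAδub]
    rw [hDcardR]
    rcases le_or_gt (s/8) r with hcase | hcase
    · have hSi' : (Si.card : ℝ) * s ≤ 304 * r := by
        have h2 : (Si.card:ℝ)*s = 8*((Si.card:ℝ)*(s/8)) := by ring
        linarith [hSibase]
      have hT1 : (T.card:ℝ) ≤ (N:ℝ) * (Si.card:ℝ) :=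
        le_trans hstep4 (mul_le_mul_of_nonneg_right hSθN (Nat.cast_nonneg _))
      have hT2 : (T.card:ℝ) * s ≤ (N:ℝ) * (304*r) := by
        calc (T.card:ℝ) * s ≤ ((N:ℝ) * (Si.card:ℝ)) * s :=
              mul_le_mul_of_nonneg_right hT1 hs0.le
          _ = (N:ℝ) * ((Si.card:ℝ) * s) := by ring
          _ ≤ (N:ℝ) * (304*r) := mul_le_mul_of_nonneg_left hSi' (Nat.cast_nonneg _)
      have hT3 : (T.card:ℝ) ≤ 2*(N:ℝ)*((T.card:ℝ)*s) := by
        have h1 : (1:ℝ) ≤ 2*(N:ℝ)*s := by linarith [hNs]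
        calc (T.card:ℝ) = (T.card:ℝ)*1 := (mul_one _).symm
          _ ≤ (T.card:ℝ)*(2*(N:ℝ)*s) := mul_le_mul_of_nonneg_left h1 (Nat.cast_nonneg _)
          _ = 2*(N:ℝ)*((T.card:ℝ)*s) := by ring
      calc ((D ∩ Metric.closedBall x r).ncard : ℝ) ≤ (T.card:ℝ) := hstep2
        _ ≤ 2*(N:ℝ)*((T.card:ℝ)*s) := hT3
        _ ≤ 2*(N:ℝ)*((N:ℝ)*(304*r)) := by
            apply mul_le_mul_of_nonneg_left hT2 (by positivity)
        _ = 608*(r*((N:ℝ)*(N:ℝ))) := by ring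
        _ ≤ 1000*(r*((N:ℝ)*(N:ℝ))) := by
            have h9 : (0:ℝ) ≤ r*((N:ℝ)*(N:ℝ)) :=
              mul_nonneg hr0.le (mul_nonneg (Nat.cast_nonneg N) (Nat.cast_nonneg N))
            linarith
        _ = 1000*r*((N:ℝ)*(N:ℝ)) := by ring
    · have hSi35 : (Si.card : ℝ) ≤ 38 := by
        by_contra hcon
        push_neg at hcon
        have h1 : (38:ℝ)*(s/8) < (Si.card:ℝ)*(s/8) :=
          mul_lt_mul_of_pos_right hcon (by positivity)
        linarith [hSibase]
      have hSθ' : (Sθ.card : ℝ) * δ ≤ 2*r := by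
        have h1 : (Sθ.card:ℝ)*(4*δ) = 4*((Sθ.card:ℝ)*δ) := by ring
        linarith [hSθb]
      have hT1 : (T.card:ℝ) * δ ≤ 38*(2*r) := by
        calc (T.card:ℝ)*δ ≤ ((Sθ.card:ℝ)*(Si.card:ℝ))*δ :=
              mul_le_mul_of_nonneg_right hstep4 hδ.le
          _ = (Si.card:ℝ)*((Sθ.card:ℝ)*δ) := by ring
          _ ≤ 38*(2*r) := mul_le_mul hSi35 hSθ' (by positivity) (by norm_num)
      have hT2 : (T.card:ℝ) ≤ 76*r*(4*(N:ℝ)^2) := by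
        have h2 : (T.card:ℝ) = ((T.card:ℝ)*δ)*δ⁻¹ := by field_simp
        rw [h2]
        calc ((T.card:ℝ)*δ)*δ⁻¹ ≤ (76*r)*δ⁻¹ :=
              mul_le_mul_of_nonneg_right (by linarith) (inv_pos.2 hδ).le
          _ ≤ (76*r)*(4*(N:ℝ)^2) := mul_le_mul_of_nonneg_left hNsq (by positivity)
      calc ((D ∩ Metric.closedBall x r).ncard : ℝ) ≤ (T.card:ℝ) := hstep2
        _ ≤ 76*r*(4*(N:ℝ)^2) := hT2
        _ = 304*(r*((N:ℝ)*(N:ℝ))) := by ring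
        _ ≤ 1000*(r*((N:ℝ)*(N:ℝ))) := by
            have h9 : (0:ℝ) ≤ r*((N:ℝ)*(N:ℝ)) :=
              mul_nonneg hr0.le (mul_nonneg (Nat.cast_nonneg N) (Nat.cast_nonneg N))
            linarith
        _ = 1000*r*((N:ℝ)*(N:ℝ)) := by ring
  -- direction interval
  have hdir : ∀ p ∈ D, (0:ℝ) ≤ p.1 ∧ p.1 ≤ 0 + 1000 * δ ^ ((1:ℝ)/2) := by
    intro p hp
    rw [hD_def] at hp
    obtain ⟨q, hq, rfl⟩ := hp
    obtain ⟨hj, hi⟩ := (hmemG q).1 (Finset.mem_coe.1 hq)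
    simp only [hf_def]
    refine ⟨hθ0 q.1, ?_⟩
    rw [show (1:ℝ)/2 = 1/2 by norm_num, hpow_half]
    linarith [hθub q.1 hj, hs0.le]
  -- direction set count
  have hdirset : δ ^ (-(1:ℝ)/2) / 1000 ≤ (({θ | ∃ b, (θ, b) ∈ D} : Set ℝ).ncard : ℝ) := by
    have hEeq : {θ' : ℝ | ∃ b, (θ', b) ∈ D} = θf '' ↑(Finset.range N) := by
      ext t
      constructor
      · rintro ⟨b, hb⟩
        rw [hD_def] at hb
        obtain ⟨q, hq, hfq⟩ := hb
        obtain ⟨hj, -⟩ := (hmemG q).1 (Finset.mem_coe.1 hq)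
        refine ⟨q.1, by simpa using hj, ?_⟩
        rw [hf_def] at hfq
        exact congrArg Prod.fst hfq
      · rintro ⟨j, hj, rfl⟩
        have hjN : j < N := by simpa using hj
        refine ⟨cf j * (((0:ℕ):ℝ) * (A:ℝ) * δ), ?_⟩
        rw [hD_def]
        exact ⟨(j, (0:ℕ)), Finset.mem_coe.2 ((hmemG _).2 ⟨hjN, by omega⟩), by rw [hf_def]⟩
    rw [hEeq, hpow_neg]
    have hinj : Set.InjOn θf ↑(Finset.range N) := by
      intro a ha b hb h
      exact hθinj a b (by simpa using ha) (by simpa using hb) h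
    rw [Set.ncard_image_of_injOn hinj, Set.ncard_coe_finset, Finset.card_range]
    linarith [hNR, hsinv]
  -- the tube family
  set 𝒯 : Set (Set (ℝ × ℝ)) := {tb | ∃ p ∈ D, tb = tube δ p.1 p.2} with h𝒯_def
  have h𝒯eq : 𝒯 = (fun p : ℝ × ℝ => tube δ p.1 p.2) '' D := by
    rw [h𝒯_def]
    ext t
    constructor
    · rintro ⟨p, hp, h⟩
      exact ⟨p, hp, h.symm⟩
    · rintro ⟨p, hp, h⟩
      exact ⟨p, hp, h.symm⟩
  have h𝒯fin : 𝒯.Finite := by rw [h𝒯eq]; exact hDfin.image _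
  -- tube count lower bound on rich squares
  have htc : ∀ i, i < N → ∀ m : ℕ, m ≤ N/8 →
      N ≤ tubeCount 𝒯 δ ((m:ℤ), ((i*A : ℕ):ℤ)) := by
    intro i hi m hm
    set q : ℤ × ℤ := ((m:ℤ), ((i*A : ℕ):ℤ)) with hq_def
    set g : ℕ → Set (ℝ × ℝ) := fun j => tube δ (θf j) (cf j * ((i:ℝ)*A*δ)) with hg_def
    have hmR : 8*(m:ℝ) ≤ (N:ℝ) := by
      have h8 : 8*m ≤ N := by omega
      exact_mod_cast h8
    have hhi' := hhi i hi
    have hmem : ∀ j, j < N → g j ∈ {t | t ∈ 𝒯 ∧ (t ∩ sqIdx δ q).Nonempty} := by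
      intro j hj
      refine ⟨?_, ?_⟩
      · rw [h𝒯eq]
        refine ⟨f (j, i), ?_, ?_⟩
        · rw [hD_def]
          exact ⟨(j, i), Finset.mem_coe.2 ((hmemG _).2 ⟨hj, hi⟩), rfl⟩
        · simp only [hf_def, hg_def]
      · refine ⟨((m:ℝ)*δ, (i:ℝ)*(A:ℝ)*δ), ?_, ?_⟩
        · simp only [hg_def, tube, Set.mem_setOf_eq, Set.mem_Icc]
          refine ⟨?_, ⟨by positivity, ?_⟩, ⟨hhi'.1, le_trans hhi'.2 (by norm_num)⟩⟩
          · rw [hsin j hj, hcos j]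
            rw [show -(4*(j:ℝ)*δ) * ((m:ℝ)*δ) + cf j * ((i:ℝ)*(A:ℝ)*δ) - cf j * ((i:ℝ)*(A:ℝ)*δ)
                = -(4*(j:ℝ)*(m:ℝ)*δ^2) by ring, abs_neg, abs_of_nonneg (by positivity)]
            have hjR : (j:ℝ) ≤ (N:ℝ) := by exact_mod_cast hj.le
            have hprod : (j:ℝ)*(8*(m:ℝ)) ≤ (N:ℝ)*(N:ℝ) :=
              mul_le_mul hjR hmR (by positivity) (Nat.cast_nonneg _)
            have h1 : 4*(j:ℝ)*(m:ℝ) ≤ (N:ℝ)^2/2 := by nlinarith [hprod]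
            have h2 : 4*(j:ℝ)*(m:ℝ)*δ ≤ (N:ℝ)^2/2*δ := mul_le_mul_of_nonneg_right h1 hδ.le
            have h3 : (N:ℝ)^2/2*δ ≤ 1/2 := by linarith [hN2δ]
            have h4 : 4*(j:ℝ)*(m:ℝ)*δ*δ ≤ (1/2)*δ :=
              mul_le_mul_of_nonneg_right (by linarith) hδ.le
            nlinarith [h4]
          · have h5 : (m:ℝ)*δ ≤ (N:ℝ)*δ := by
              apply mul_le_mul_of_nonneg_right _ hδ.le
              linarith
            linarith [hNδ, hsle]
        · simp only [hq_def, sqIdx, Set.mem_prod, Set.mem_Ico]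
          push_cast
          refine ⟨⟨le_refl _, ?_⟩, ⟨le_of_eq (by ring), ?_⟩⟩
          · nlinarith [hδ]
          · nlinarith [hδ]
    have hginj : Set.InjOn g ↑(Finset.range N) := by
      have key : ∀ a b : ℕ, a < b → b < N → g a ≠ g b := by
        intro a b hab hbN hgeq
        have haN : a < N := lt_trans hab hbN
        have hcb := hc12 b hbN
        have hca := hc12 a haN
        have hcb0 : cf b ≠ 0 := by linarith
        have hbR : (b:ℝ) ≤ (N:ℝ) := by exact_mod_cast hbN.le
        set y : ℝ := (i:ℝ)*(A:ℝ)*δ + 2*(b:ℝ)*δ / cf b with hy_def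
        have hy0 : 0 ≤ y := by
          apply add_nonneg hhi'.1
          apply div_nonneg (by positivity) (by linarith)
        have hyub : y ≤ 1 := by
          have h1 : 2*(b:ℝ)*δ / cf b ≤ 4*((b:ℝ)*δ) := by
            rw [div_le_iff₀ (by linarith)]
            nlinarith [mul_nonneg (mul_nonneg (Nat.cast_nonneg b : (0:ℝ) ≤ (b:ℝ)) hδ.le)
              (sub_nonneg.2 hcb)]
          have h2 : (b:ℝ)*δ ≤ s := by
            calc (b:ℝ)*δ ≤ (N:ℝ)*δ := mul_le_mul_of_nonneg_right hbR hδ.le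
              _ ≤ s := hNδ
          have := hhi'.2
          simp only [hy_def]
          linarith [hsle]
        have hmem_b : ((1:ℝ)/2, y) ∈ g b := by
          simp only [hg_def, tube, Set.mem_setOf_eq, Set.mem_Icc]
          refine ⟨?_, ⟨by norm_num, by norm_num⟩, ⟨hy0, hyub⟩⟩
          rw [hsin b hbN, hcos b]
          rw [show -(4*(b:ℝ)*δ) * (1/2) + cf b * y - cf b * ((i:ℝ)*(A:ℝ)*δ)
              = cf b * (y - ((i:ℝ)*(A:ℝ)*δ + 2*(b:ℝ)*δ / cf b)) + (cf b * (2*(b:ℝ)*δ/cf b) - 2*(b:ℝ)*δ) by ring]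
          rw [show cf b * (2*(b:ℝ)*δ/cf b) = 2*(b:ℝ)*δ by field_simp]
          simp only [hy_def]
          rw [show (i:ℝ)*(A:ℝ)*δ + 2*(b:ℝ)*δ/cf b - ((i:ℝ)*(A:ℝ)*δ + 2*(b:ℝ)*δ/cf b) = 0 by ring]
          simp [abs_of_nonneg, hδ.le]
        have hmem_a : ((1:ℝ)/2, y) ∉ g a := by
          intro hmem'
          simp only [hg_def, tube, Set.mem_setOf_eq, Set.mem_Icc] at hmem'
          obtain ⟨habs, -, -⟩ := hmem'
          rw [hsin a haN, hcos a] at habs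
          have hval : -(4*(a:ℝ)*δ) * (1/2) + cf a * y - cf a * ((i:ℝ)*(A:ℝ)*δ)
              = 2*δ*((b:ℝ)*(cf a/cf b) - (a:ℝ)) := by
            simp only [hy_def]
            field_simp
            ring
          have hr1 : (1:ℝ) ≤ cf a / cf b := by
            rw [le_div_iff₀ (by linarith)]
            simpa using hcmono a b hab.le
          have hr2 : (b:ℝ) ≤ (b:ℝ)*(cf a/cf b) :=
            le_mul_of_one_le_right (Nat.cast_nonneg _) hr1
          have hba : (a:ℝ) + 1 ≤ (b:ℝ) := by exact_mod_cast hab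
          have h5 : 1 ≤ (b:ℝ)*(cf a/cf b) - (a:ℝ) := by linarith
          have hge : 2*δ ≤ 2*δ*((b:ℝ)*(cf a/cf b) - (a:ℝ)) := by
            calc 2*δ = 2*δ*1 := (mul_one _).symm
              _ ≤ 2*δ*((b:ℝ)*(cf a/cf b) - (a:ℝ)) :=
                mul_le_mul_of_nonneg_left h5 (by positivity)
          rw [hval, abs_of_nonneg (by linarith)] at habs
          linarith
        rw [← hgeq] at hmem_b
        exact hmem_a hmem_b
      intro a ha b hb hab
      rcases lt_trichotomy a b with h | h | h
      · exact absurd hab (key a b h (by simpa using hb))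
      · exact h
      · exact absurd hab.symm (key b a h (by simpa using ha))
    have hsubS : g '' ↑(Finset.range N) ⊆ {t | t ∈ 𝒯 ∧ (t ∩ sqIdx δ q).Nonempty} := by
      rintro t ⟨j, hj, rfl⟩
      exact hmem j (by simpa using hj)
    have hfinS : {t | t ∈ 𝒯 ∧ (t ∩ sqIdx δ q).Nonempty}.Finite :=
      h𝒯fin.subset (fun t ht => ht.1)
    have h1 : (g '' ↑(Finset.range N)).ncard = N := by
      rw [Set.ncard_image_of_injOn hginj, Set.ncard_coe_finset, Finset.card_range]
    calc N = (g '' ↑(Finset.range N)).ncard := h1.symm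
      _ ≤ tubeCount 𝒯 δ q := Set.ncard_le_ncard hsubS hfinS
  -- rich squares
  set M : ℕ := N/8 with hM_def
  have hMlb : (N:ℝ)/8 ≤ (M:ℝ) + 1 := by
    have h8 : N ≤ 8*(M+1) := by omega
    have h8' : (N:ℝ) ≤ 8*((M:ℝ)+1) := by exact_mod_cast h8
    linarith
  set e : ℕ × ℕ → ℤ × ℤ := fun p => ((p.1:ℤ), ((p.2*A : ℕ):ℤ)) with he_def
  have hrichsub : e '' ↑(Finset.range (M+1) ×ˢ Finset.range N) ⊆ richSquaresGe 𝒯 δ (N:ℝ) := by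
    rintro w ⟨p, hp, rfl⟩
    obtain ⟨hm, hi⟩ : p.1 < M+1 ∧ p.2 < N := by
      simpa [Finset.mem_product] using hp
    have hmM : p.1 ≤ N/8 := by omega
    have hcount := htc p.2 hi p.1 hmM
    have hp1R : (p.1:ℝ)*δ ≤ 1 := by
      have h8 : 8*p.1 ≤ N := by omega
      have h8' : 8*(p.1:ℝ) ≤ (N:ℝ) := by exact_mod_cast h8
      have h5 : (p.1:ℝ)*δ ≤ (N:ℝ)*δ := mul_le_mul_of_nonneg_right (by linarith) hδ.le
      linarith [hNδ, hsle]
    have hp2R : ((p.2*A:ℕ):ℝ)*δ ≤ 1 := by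
      push_cast
      have := (hhi p.2 hi).2
      calc (p.2:ℝ)*(A:ℝ)*δ ≤ 1/2 := this
        _ ≤ 1 := by norm_num
    refine ⟨⟨?_, ?_, ?_, ?_⟩, ?_⟩
    · simp only [he_def]; positivity
    · simp only [he_def]; positivity
    · simp only [he_def]; push_cast; push_cast at hp1R; exact hp1R
    · simp only [he_def]; push_cast; push_cast at hp2R; exact hp2R
    · simp only [he_def]
      exact_mod_cast hcount
  have heinj : Set.InjOn e ↑(Finset.range (M+1) ×ˢ Finset.range N) := by
    intro p hp w hw h
    simp only [he_def, Prod.mk.injEq] at h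
    have h1 : p.1 = w.1 := by exact_mod_cast h.1
    have h2 : p.2*A = w.2*A := by exact_mod_cast h.2
    have h3 : p.2 = w.2 := Nat.eq_of_mul_eq_mul_right (by omega) h2
    exact Prod.ext h1 h3
  have hrichfin : (richSquaresGe 𝒯 δ (N:ℝ)).Finite := by
    apply Set.Finite.subset (Set.finite_Icc ((0,0) : ℤ×ℤ) ((⌈δ⁻¹⌉, ⌈δ⁻¹⌉) : ℤ×ℤ))
    rintro w ⟨⟨h1, h2, h3, h4⟩, -⟩
    have hδi : ∀ z : ℤ, 0 ≤ z → (z:ℝ)*δ ≤ 1 → z ≤ ⌈δ⁻¹⌉ := by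
      intro z hz0 hz1
      have hzr : (z:ℝ) ≤ δ⁻¹ := by
        rw [show δ⁻¹ = 1/δ by ring]
        rw [le_div_iff₀ hδ]
        exact hz1
      have := le_trans hzr (Int.le_ceil δ⁻¹)
      exact_mod_cast this
    rw [Set.mem_Icc]
    exact ⟨⟨h1, h2⟩, ⟨hδi _ h1 h3, hδi _ h2 h4⟩⟩
  have hrichcard : ((M:ℝ)+1)*(N:ℝ) ≤ ((richSquaresGe 𝒯 δ (N:ℝ)).ncard : ℝ) := by
    have h1 : (e '' ↑(Finset.range (M+1) ×ˢ Finset.range N)).ncard = (M+1)*N := by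
      rw [Set.ncard_image_of_injOn heinj, Set.ncard_coe_finset, Finset.card_product,
        Finset.card_range, Finset.card_range]
    have h2 := Set.ncard_le_ncard hrichsub hrichfin
    rw [h1] at h2
    have h3 : (((M+1)*N : ℕ):ℝ) ≤ ((richSquaresGe 𝒯 δ (N:ℝ)).ncard : ℝ) := by exact_mod_cast h2
    push_cast at h3
    linarith
  have hrichlb : δ⁻¹/32 ≤ ((richSquaresGe 𝒯 δ (N:ℝ)).ncard : ℝ) := by
    have h1 : (N:ℝ)/8*(N:ℝ) ≤ ((M:ℝ)+1)*(N:ℝ) :=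
      mul_le_mul_of_nonneg_right hMlb (Nat.cast_nonneg _)
    have h2 : δ⁻¹/4 ≤ (N:ℝ)^2 := by linarith [hNsq]
    have h3 : (N:ℝ)/8*(N:ℝ) = (N:ℝ)^2/8 := by ring
    linarith [hrichcard]
  -- final assembly
  refine ⟨D, hDfin, hcard_lb, hcard_ub, hnonconc, ⟨0, hdir⟩, hdirset, (N:ℝ), ?_, ?_, ?_, ?_⟩
  · rw [hpow_neg]
    linarith [hNR, hsinv]
  · rw [hpow_neg]
    linarith [hNle, hsinv]
  · have : δ⁻¹/1000 ≤ δ⁻¹/32 := by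
      have : (0:ℝ) < δ⁻¹ := inv_pos.2 hδ
      linarith
    linarith [hrichlb]
  · rw [hpow_neg, hDcardR]
    have hNpos : (0:ℝ) < (N:ℝ) := by linarith [hN1000R]
    have h1 : s⁻¹*((N:ℝ)*(N:ℝ))^2/(1000*(N:ℝ)^3) = s⁻¹*(N:ℝ)/1000 := by
      field_simp
    rw [h1]
    have h2 : s⁻¹*(N:ℝ)/1000 ≤ s⁻¹*s⁻¹/1000 := by
      have := mul_le_mul_of_nonneg_left hNle (by positivity : (0:ℝ) ≤ s⁻¹)
      linarith
    have h3 : s⁻¹*s⁻¹ = δ⁻¹ := by rw [← hδs]; field_simp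
    have h4 : δ⁻¹/1000 ≤ δ⁻¹/32 := by
      have : (0:ℝ) < δ⁻¹ := inv_pos.2 hδ
      linarith
    linarith [hrichlb]
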